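/- The matrix X(λ) = [[λ, λ'],[λ', -λ]] (λ ∈ [0,1], λ' = √(1-λ²)) satisfies X = X* = X⁻¹ and tr X = 0, and the UAMO cocycle matrix A_{λ₁,λ₂,z}(θ) satisfies A*X(λ₁)A = X(λ₁) for all θ ∈ ℝ, λ₁ ∈ (0,1], λ₂ ∈ [0,1], and |z| = 1 (whenever A is defined, i.e. λ₂cos(2πθ) - iλ₂' ≠ 0). -/

import Mathlib

open Matrix

/-- The UAMO transfer matrix cocycle. -/
noncomputable def uamoA (lam1 lam2 : ℝ) (z : ℂ) (θ : ℝ) : Matrix (Fin 2) (Fin 2) ℂ :=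
  ((lam2 * Real.cos (2 * Real.pi * θ) : ℂ) - Complex.I * (Real.sqrt (1 - lam2 ^ 2) : ℂ))⁻¹ •
    !![(lam1 : ℂ)⁻¹ * z⁻¹
          + 2 * (Real.sqrt (1 - lam1 ^ 2) : ℂ) * (lam1 : ℂ)⁻¹ * (lam2 : ℂ)
              * (Real.sin (2 * Real.pi * θ) : ℂ)
          + z * (Real.sqrt (1 - lam1 ^ 2) : ℂ) ^ 2 * (lam1 : ℂ)⁻¹,
        -((lam2 : ℂ) * (Real.sin (2 * Real.pi * θ) : ℂ)) - (Real.sqrt (1 - lam1 ^ 2) : ℂ) * z;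
        -((lam2 : ℂ) * (Real.sin (2 * Real.pi * θ) : ℂ)) - (Real.sqrt (1 - lam1 ^ 2) : ℂ) * z,
        (lam1 : ℂ) * z]

/-- The conjugation matrix `X(λ)`. -/
noncomputable def uamoX (lam : ℝ) : Matrix (Fin 2) (Fin 2) ℂ :=
  !![(lam : ℂ), (Real.sqrt (1 - lam ^ 2) : ℂ);
     (Real.sqrt (1 - lam ^ 2) : ℂ), -(lam : ℂ)]


set_option maxHeartbeats 1000000


lemma uamo_key (l1 l2 co si s1 s2 z : ℂ) (hz : z * z⁻¹ = 1) (hl : l1 * l1⁻¹ = 1)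
    (hs1 : s1^2 = 1 - l1^2) (hs2 : s2^2 = 1 - l2^2) (hcs : co^2 + si^2 = 1) :
    !![l1⁻¹*z + 2*s1*l1⁻¹*l2*si + z⁻¹*s1^2*l1⁻¹, -(l2*si) - s1*z⁻¹;
       -(l2*si) - s1*z⁻¹, l1*z⁻¹] * !![l1, s1; s1, -l1] *
    !![l1⁻¹*z⁻¹ + 2*s1*l1⁻¹*l2*si + z*s1^2*l1⁻¹, -(l2*si) - s1*z;
       -(l2*si) - s1*z, l1*z]
    = ((l2*co + Complex.I*s2) * (l2*co - Complex.I*s2)) • !![l1, s1; s1, -l1] := by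
  have Isq : Complex.I^2 = -1 := Complex.I_sq
  ext i j
  fin_cases i <;> fin_cases j <;> simp [mul_apply, Fin.sum_univ_two]
  · linear_combination (-1*z⁻¹^2*l1⁻¹ + -2*z*z⁻¹*l1⁻¹ + -1*z^2*l1⁻¹ + -2*s1^2*z*z⁻¹*l1⁻¹ + -3*l2*si*s1*z⁻¹*l1⁻¹ + -3*l2*si*s1*z*l1⁻¹ + -4*l2^2*si^2*l1⁻¹ + l1*z⁻¹^2*l1⁻¹^2 + -1*l1*z*z⁻¹ + l1*z*z⁻¹*l1⁻¹^2 + l1*z^2*l1⁻¹^2 + l1*s1^2*z*z⁻¹*l1⁻¹^2 + 2*l1*l2*si*s1*z⁻¹*l1⁻¹^2 + 2*l1*l2*si*s1*z*l1⁻¹^2 + 4*l1*l2^2*si^2*l1⁻¹^2 + 2*l1^2*z*z⁻¹*l1⁻¹ + -1*l1^3*z*z⁻¹*l1⁻¹^2)*hs1 + (l1*Complex.I^2)*hs2 + (-4*l2^2*l1⁻¹ + -1*l1*l2^2 + 4*l1*l2^2*l1⁻¹^2 + 4*l1^2*l2^2*l1⁻¹ + -4*l1^3*l2^2*l1⁻¹^2)*hcs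 + (l1 + -1*l1*l2^2)*Isq + (-2*l1⁻¹ + -1*l1 + 2*l1*l1⁻¹^2 + 4*l1^2*l1⁻¹ + l1^3 + -2*l1^3*l1⁻¹^2 + -2*l1^4*l1⁻¹ + l1^5*l1⁻¹^2)*hz + (2*l1⁻¹ + z⁻¹^2*l1⁻¹ + z^2*l1⁻¹ + 4*l2*si*s1*z⁻¹*l1⁻¹ + 4*l2*si*s1*z*l1⁻¹ + 4*l2^2*l1⁻¹ + -4*l2^2*co^2*l1⁻¹ + 2*l1 + l1*l2*si*s1*z⁻¹ + l1*l2*si*s1*z + -2*l1^2*l1⁻¹ + -1*l1^2*z⁻¹^2*l1⁻¹ + -1*l1^2*z^2*l1⁻¹ + -2*l1^2*l2*si*s1*z⁻¹*l1⁻¹ + -2*l1^2*l2*si*s1*z*l1⁻¹ + -4*l1^2*l2^2*l1⁻¹ + 4*l1^2*l2^2*co^2*l1⁻¹ + -1*l1^3 + l1^4*l1⁻¹)*hl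
  · linear_combination (s1*z*z⁻¹ + l2*si*z⁻¹ + l2*si*z + -1*l1*l2*si*z⁻¹*l1⁻¹)*hs1 + (s1*Complex.I^2)*hs2 + (l2^2*s1 + -2*l1*l2^2*s1*l1⁻¹)*hcs + (s1 + -1*l2^2*s1)*Isq + (s1)*hz + (-1*l2*si*z⁻¹ + -1*l2*si*z + -2*l2^2*s1 + 2*l2^2*co^2*s1 + l1^2*l2*si*z⁻¹)*hl
  · linear_combination (s1*z*z⁻¹ + l2*si*z⁻¹ + l2*si*z + -1*l1*l2*si*z*l1⁻¹)*hs1 + (s1*Complex.I^2)*hs2 + (l2^2*s1 + -2*l1*l2^2*s1*l1⁻¹)*hcs + (s1 + -1*l2^2*s1)*Isq + (s1)*hz + (-1*l2*si*z⁻¹ + -1*l2*si*z + -2*l2^2*s1 + 2*l2^2*co^2*s1 + l1^2*l2*si*z)*hl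
  · linear_combination (-1*l1*z*z⁻¹)*hs1 + (-1*l1*Complex.I^2)*hs2 + (l1*l2^2)*hcs + (-1*l1 + l1*l2^2)*Isq + (-1*l1)*hz

lemma uamo_sandwich (c : ℂ) (M X : Matrix (Fin 2) (Fin 2) ℂ) :
    (c⁻¹ • M)ᴴ * X * (c⁻¹ • M) = ((star c)⁻¹ * c⁻¹) • (Mᴴ * X * M) := by
  rw [conjTranspose_smul, Matrix.smul_mul, Matrix.smul_mul, Matrix.mul_smul, smul_smul,
    star_inv₀]

theorem uamoX_conjugation (lam : ℝ) (hlam : lam ∈ Set.Icc (0:ℝ) 1) :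
    uamoX lam = (uamoX lam)ᴴ
    ∧ uamoX lam * uamoX lam = 1
    ∧ (uamoX lam).trace = 0
    ∧ ∀ (lam1 lam2 : ℝ), lam1 ∈ Set.Ioc (0:ℝ) 1 → lam2 ∈ Set.Icc (0:ℝ) 1 →
        ∀ (z : ℂ), ‖z‖ = 1 → ∀ (θ : ℝ),
        (lam2 * Real.cos (2 * Real.pi * θ) : ℂ)
            - Complex.I * (Real.sqrt (1 - lam2 ^ 2) : ℂ) ≠ 0 →
        (uamoA lam1 lam2 z θ)ᴴ * uamoX lam1 * uamoA lam1 lam2 z θ = uamoX lam1 := by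
  obtain ⟨hl0, hl1⟩ := hlam
  have hsq : ((Real.sqrt (1 - lam ^ 2) : ℝ) : ℂ)^2 = 1 - (lam:ℂ)^2 := by
    rw [← Complex.ofReal_pow, Real.sq_sqrt (by nlinarith)]; push_cast; ring
  refine ⟨?_, ?_, ?_, ?_⟩
  · ext i j; fin_cases i <;> fin_cases j <;> simp [uamoX, conjTranspose_apply]
  · ext i j
    fin_cases i <;> fin_cases j <;>
      simp [uamoX, mul_apply, Fin.sum_univ_two, Matrix.one_apply] <;>
      first
        | ring1
        | linear_combination hsq
  · simp [uamoX, Matrix.trace_fin_two]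
  · intro lam1 lam2 hm1 hm2 z hzabs θ hc
    obtain ⟨h1p, h1le⟩ := hm1
    obtain ⟨h2a, h2b⟩ := hm2
    have hs1 : ((Real.sqrt (1 - lam1 ^ 2) : ℝ) : ℂ)^2 = 1 - (lam1:ℂ)^2 := by
      rw [← Complex.ofReal_pow, Real.sq_sqrt (by nlinarith)]; push_cast; ring
    have hs2 : ((Real.sqrt (1 - lam2 ^ 2) : ℝ) : ℂ)^2 = 1 - (lam2:ℂ)^2 := by
      rw [← Complex.ofReal_pow, Real.sq_sqrt (by nlinarith)]; push_cast; ring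
    have hcs : ((Real.cos (2 * Real.pi * θ) : ℝ) : ℂ)^2
        + ((Real.sin (2 * Real.pi * θ) : ℝ) : ℂ)^2 = 1 := by
      norm_cast; exact Real.cos_sq_add_sin_sq _
    have hzne : z ≠ 0 := by
      intro h; rw [h] at hzabs; simp at hzabs
    have hzc : (starRingEnd ℂ) z = z⁻¹ := by
      refine eq_inv_of_mul_eq_one_left ?_
      rw [mul_comm, Complex.mul_conj, Complex.normSq_eq_norm_sq, hzabs]; norm_num
    have hl1ne : (lam1 : ℂ) ≠ 0 := Complex.ofReal_ne_zero.mpr (ne_of_gt h1p)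
    have hzinv : z * z⁻¹ = 1 := mul_inv_cancel₀ hzne
    have hlinv : (lam1:ℂ) * (lam1:ℂ)⁻¹ = 1 := mul_inv_cancel₀ hl1ne
    rw [uamoA, uamoX, uamo_sandwich]
    have hMh : (!![(lam1 : ℂ)⁻¹ * z⁻¹
          + 2 * (Real.sqrt (1 - lam1 ^ 2) : ℂ) * (lam1 : ℂ)⁻¹ * (lam2 : ℂ)
              * (Real.sin (2 * Real.pi * θ) : ℂ)
          + z * (Real.sqrt (1 - lam1 ^ 2) : ℂ) ^ 2 * (lam1 : ℂ)⁻¹,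
        -((lam2 : ℂ) * (Real.sin (2 * Real.pi * θ) : ℂ)) - (Real.sqrt (1 - lam1 ^ 2) : ℂ) * z;
        -((lam2 : ℂ) * (Real.sin (2 * Real.pi * θ) : ℂ)) - (Real.sqrt (1 - lam1 ^ 2) : ℂ) * z,
        (lam1 : ℂ) * z])ᴴ
        = !![(lam1:ℂ)⁻¹*z + 2*(Real.sqrt (1 - lam1 ^ 2) : ℂ)*(lam1:ℂ)⁻¹*(lam2:ℂ)
              *(Real.sin (2 * Real.pi * θ) : ℂ)
              + z⁻¹*(Real.sqrt (1 - lam1 ^ 2) : ℂ)^2*(lam1:ℂ)⁻¹,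
            -((lam2:ℂ)*(Real.sin (2 * Real.pi * θ) : ℂ)) - (Real.sqrt (1 - lam1 ^ 2) : ℂ)*z⁻¹;
            -((lam2:ℂ)*(Real.sin (2 * Real.pi * θ) : ℂ)) - (Real.sqrt (1 - lam1 ^ 2) : ℂ)*z⁻¹,
            (lam1:ℂ)*z⁻¹] := by
      ext i j
      fin_cases i <;> fin_cases j <;>
        simp [conjTranspose_apply, hzc, Complex.conj_ofReal, -Complex.ofReal_sin, -Complex.ofReal_cos]
    rw [hMh]
    have hkey := uamo_key (lam1:ℂ) (lam2:ℂ) ((Real.cos (2 * Real.pi * θ) : ℝ) : ℂ)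
      ((Real.sin (2 * Real.pi * θ) : ℝ) : ℂ) ((Real.sqrt (1 - lam1 ^ 2) : ℝ) : ℂ)
      ((Real.sqrt (1 - lam2 ^ 2) : ℝ) : ℂ) z hzinv hlinv hs1 hs2 hcs
    rw [hkey, smul_smul]
    have hstar : star ((lam2 : ℂ) * (Real.cos (2 * Real.pi * θ) : ℂ)
        - Complex.I * (Real.sqrt (1 - lam2 ^ 2) : ℂ))
        = (lam2:ℂ) * (Real.cos (2 * Real.pi * θ) : ℂ)
          + Complex.I * (Real.sqrt (1 - lam2 ^ 2) : ℂ) := by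
      simp only [Complex.star_def, map_sub, _root_.map_mul, Complex.conj_ofReal, Complex.conj_I]
      ring
    have hsne : (lam2:ℂ) * (Real.cos (2 * Real.pi * θ) : ℂ)
        + Complex.I * (Real.sqrt (1 - lam2 ^ 2) : ℂ) ≠ 0 := hstar ▸ star_ne_zero.mpr hc
    rw [hstar, show ((lam2:ℂ) * (Real.cos (2 * Real.pi * θ) : ℂ)
          + Complex.I * (Real.sqrt (1 - lam2 ^ 2) : ℂ))⁻¹
        * ((lam2:ℂ) * (Real.cos (2 * Real.pi * θ) : ℂ)
          - Complex.I * (Real.sqrt (1 - lam2 ^ 2) : ℂ))⁻¹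
        * (((lam2:ℂ) * (Real.cos (2 * Real.pi * θ) : ℂ)
            + Complex.I * (Real.sqrt (1 - lam2 ^ 2) : ℂ))
          * ((lam2:ℂ) * (Real.cos (2 * Real.pi * θ) : ℂ)
            - Complex.I * (Real.sqrt (1 - lam2 ^ 2) : ℂ))) = 1 from by
      rw [← _root_.mul_inv_rev, mul_comm ((lam2:ℂ) * (Real.cos (2 * Real.pi * θ) : ℂ)
            + Complex.I * (Real.sqrt (1 - lam2 ^ 2) : ℂ))
          ((lam2:ℂ) * (Real.cos (2 * Real.pi * θ) : ℂ)
            - Complex.I * (Real.sqrt (1 - lam2 ^ 2) : ℂ))]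
      exact inv_mul_cancel₀ (mul_ne_zero hc hsne), one_smul]
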